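/- Let α > 0 and let μ be a measure on ℝ (with the Borel σ-algebra) such that μ({0}) = 0, μ(hA) = h^{−α} μ(A) for every h > 0 and every Borel set A ⊆ ℝ (where hA = {h·y : y ∈ A}), and such that c⁺ := μ((1,∞)) < ∞ and c⁻ := μ((−∞,−1)) < ∞. Then μ is absolutely continuous with respect to Lebesgue measure with density μ(dy) = (c⁺ α y^{−α−1} 1_{(0,∞)}(y) + c⁻ α (−y)^{−α−1} 1_{(−∞,0)}(y)) dy. -/

import Mathlib

open MeasureTheory Set
open scoped ENNReal

/-- Auxiliary: the lintegral of the density over `Ioi a`. -/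
lemma scaling_keyL (α c a : ℝ) (hα : 0 < α) (hc : 0 ≤ c) (ha : 0 < a) :
    ∫⁻ x in Ioi a, ENNReal.ofReal (c * α * x ^ (-α - 1)) = ENNReal.ofReal (c * a ^ (-α)) := by
  have hexp : (-α - 1 : ℝ) < -1 := by linarith
  have hint : IntegrableOn (fun x : ℝ => c * α * x ^ (-α - 1)) (Ioi a) :=
    (integrableOn_Ioi_rpow_of_lt hexp ha).const_mul _
  have hnn : 0 ≤ᵐ[volume.restrict (Ioi a)] fun x : ℝ => c * α * x ^ (-α - 1) := by
    filter_upwards [ae_restrict_mem measurableSet_Ioi] with x hx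
    have hx0 : (0 : ℝ) < x := ha.trans hx
    positivity
  rw [← ofReal_integral_eq_lintegral_ofReal hint hnn]
  congr 1
  rw [integral_const_mul, integral_Ioi_rpow_of_lt hexp ha]
  have h1 : (-α - 1 : ℝ) + 1 = -α := by ring
  rw [h1]
  field_simp

/-- A measure `μ` on `ℝ` with `μ({0}) = 0` that is homogeneous of
order `-α` (i.e. `μ(hA) = h^{-α} μ(A)` for all `h > 0`) and has finite tails
`c⁺ = μ((1,∞))`, `c⁻ = μ((-∞,-1))` is absolutely continuous with density
`c⁺ α y^{-α-1} 1_{(0,∞)}(y) + c⁻ α (-y)^{-α-1} 1_{(-∞,0)}(y)` w.r.t. Lebesgue measure. -/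
theorem scaling_measure_density
    (μ : Measure ℝ) (α : ℝ) (hα : 0 < α)
    (h0 : μ {(0:ℝ)} = 0)
    (hscal : ∀ h : ℝ, 0 < h → ∀ A : Set ℝ, MeasurableSet A →
      μ ((fun y => h * y) '' A) = ENNReal.ofReal (h ^ (-α)) * μ A)
    (cp cm : ℝ) (hcp0 : 0 ≤ cp) (hcm0 : 0 ≤ cm)
    (hcp : μ (Set.Ioi (1:ℝ)) = ENNReal.ofReal cp)
    (hcm : μ (Set.Iio (-1:ℝ)) = ENNReal.ofReal cm) :
    μ = volume.withDensity (fun y : ℝ =>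
      if 0 < y then ENNReal.ofReal (cp * α * y ^ (-α - 1))
      else if y < 0 then ENNReal.ofReal (cm * α * (-y) ^ (-α - 1))
      else 0) := by
  set f : ℝ → ℝ≥0∞ := fun y : ℝ =>
      if 0 < y then ENNReal.ofReal (cp * α * y ^ (-α - 1))
      else if y < 0 then ENNReal.ofReal (cm * α * (-y) ^ (-α - 1))
      else 0 with hf
  set ν : Measure ℝ := volume.withDensity f with hν
  -- the singleton {-1} is null
  have hatom : μ {(-1:ℝ)} = 0 := by
    by_contra hne
    set g : ℕ → Set ℝ := fun n => {-(1 + 1/(n+1) : ℝ)} with hg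
    have hmem : ∀ n : ℕ, (0:ℝ) < 1 + 1/((n:ℝ)+1) := fun n => by positivity
    have hval : ∀ n, μ (g n) = ENNReal.ofReal ((1 + 1/((n:ℝ)+1)) ^ (-α)) * μ {(-1:ℝ)} := by
      intro n
      have h := hscal _ (hmem n) {(-1:ℝ)} (measurableSet_singleton _)
      have himg : (fun y => (1 + 1/((n:ℝ)+1)) * y) '' {(-1:ℝ)} = g n := by
        rw [image_singleton, hg]
        norm_num
      rw [himg] at h
      exact h
    have hdisj : Pairwise (Function.onFun Disjoint g) := by
      intro m n hmn
      simp only [hg, Function.onFun, disjoint_singleton_left, mem_singleton_iff]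
      intro h
      apply hmn
      have h2 : (1:ℝ)/((m:ℝ)+1) = 1/((n:ℝ)+1) := by
        have := neg_injective h
        linarith
      rw [div_eq_div_iff (by positivity) (by positivity)] at h2
      have h4 : (m:ℝ) = (n:ℝ) := by linarith
      exact_mod_cast h4
    have hsub : (⋃ n, g n) ⊆ Iio (-1:ℝ) := by
      rintro x hx
      simp only [hg, mem_iUnion, mem_singleton_iff] at hx
      obtain ⟨n, rfl⟩ := hx
      have : (0:ℝ) < 1/((n:ℝ)+1) := by positivity
      simp only [mem_Iio]
      linarith
    have hlb : ∀ n, ENNReal.ofReal ((2:ℝ) ^ (-α)) * μ {(-1:ℝ)} ≤ μ (g n) := by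
      intro n
      rw [hval n]
      refine mul_le_mul_left (ENNReal.ofReal_le_ofReal ?_) _
      apply Real.rpow_le_rpow_of_nonpos (hmem n) ?_ (by linarith)
      have h1 : (1:ℝ)/((n:ℝ)+1) ≤ 1 := by
        rw [div_le_one (by positivity)]
        linarith [Nat.cast_nonneg (α := ℝ) n]
      linarith
    have hconst : ENNReal.ofReal ((2:ℝ) ^ (-α)) * μ {(-1:ℝ)} ≠ 0 := by
      apply mul_ne_zero _ hne
      exact (ENNReal.ofReal_pos.2 (Real.rpow_pos_of_pos two_pos _)).ne'
    have htop : (⊤ : ℝ≥0∞) ≤ μ (Iio (-1:ℝ)) := by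
      calc (⊤ : ℝ≥0∞) = ∑' _ : ℕ, ENNReal.ofReal ((2:ℝ) ^ (-α)) * μ {(-1:ℝ)} :=
            (ENNReal.tsum_const_eq_top_of_ne_zero hconst).symm
        _ ≤ ∑' n, μ (g n) := ENNReal.tsum_le_tsum hlb
        _ = μ (⋃ n, g n) :=
            (measure_iUnion hdisj (fun n => measurableSet_singleton _)).symm
        _ ≤ μ (Iio (-1:ℝ)) := measure_mono hsub
    rw [hcm] at htop
    exact ENNReal.ofReal_ne_top (top_le_iff.mp htop)
  have hatomneg : ∀ w : ℝ, w < 0 → μ {w} = 0 := by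
    intro w hw
    have h := hscal (-w) (by linarith) {(-1:ℝ)} (measurableSet_singleton _)
    have himg : (fun y => -w * y) '' {(-1:ℝ)} = {w} := by
      rw [image_singleton]
      norm_num
    rw [himg, hatom, mul_zero] at h
    exact h
  -- values of μ on tails
  have hIoi : ∀ a : ℝ, 0 < a → μ (Ioi a) = ENNReal.ofReal (cp * a ^ (-α)) := by
    intro a ha
    have himg : (fun y => a * y) '' Ioi 1 = Ioi a := by
      ext z
      simp only [mem_image, mem_Ioi]
      constructor
      · rintro ⟨y, hy, rfl⟩
        exact (lt_mul_iff_one_lt_right ha).2 hy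
      · intro hz
        exact ⟨z / a, (one_lt_div ha).2 hz, by field_simp⟩
    have h := hscal a ha (Ioi 1) measurableSet_Ioi
    rw [himg, hcp] at h
    rw [h, ← ENNReal.ofReal_mul (Real.rpow_nonneg ha.le _), mul_comm]
  have hIio : ∀ w : ℝ, w < 0 → μ (Iio w) = ENNReal.ofReal (cm * (-w) ^ (-α)) := by
    intro w hw
    have hw' : (0:ℝ) < -w := by linarith
    have himg : (fun y => -w * y) '' Iio (-1) = Iio w := by
      ext z
      simp only [mem_image, mem_Iio]
      constructor
      · rintro ⟨y, hy, rfl⟩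
        have h2 : -w * y < -w * (-1) := mul_lt_mul_of_pos_left hy hw'
        nlinarith
      · intro hz
        refine ⟨z / -w, ?_, by rw [mul_comm]; exact div_mul_cancel₀ z (by linarith)⟩
        rw [div_lt_iff₀ hw']
        linarith
    have h := hscal (-w) hw' (Iio (-1)) measurableSet_Iio
    rw [himg, hcm] at h
    rw [h, ← ENNReal.ofReal_mul (Real.rpow_nonneg hw'.le _), mul_comm]
  have hIic : ∀ w : ℝ, w < 0 → μ (Iic w) = ENNReal.ofReal (cm * (-w) ^ (-α)) := by
    intro w hw
    have heq : μ (Iic w) = μ (Iio w) := by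
      apply le_antisymm
      · calc μ (Iic w) = μ (Iio w ∪ {w}) := by rw [Iio_union_right]
          _ ≤ μ (Iio w) + μ {w} := measure_union_le _ _
          _ = μ (Iio w) := by rw [hatomneg w hw, add_zero]
      · exact measure_mono Iio_subset_Iic_self
    rw [heq]
    exact hIio w hw
  -- values of ν
  have hν0 : ν {(0:ℝ)} = 0 :=
    withDensity_absolutelyContinuous volume f (Real.volume_singleton)
  have hνIoi : ∀ a : ℝ, 0 < a → ν (Ioi a) = ENNReal.ofReal (cp * a ^ (-α)) := by
    intro a ha
    rw [hν, withDensity_apply _ measurableSet_Ioi]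
    have h1 : ∫⁻ y in Ioi a, f y = ∫⁻ y in Ioi a, ENNReal.ofReal (cp * α * y ^ (-α - 1)) := by
      apply setLIntegral_congr_fun measurableSet_Ioi
      intro y hy
      rw [hf]
      simp only [if_pos (ha.trans hy)]
    rw [h1]
    exact scaling_keyL α cp a hα hcp0 ha
  have hνIic : ∀ w : ℝ, w < 0 → ν (Iic w) = ENNReal.ofReal (cm * (-w) ^ (-α)) := by
    intro w hw
    rw [hν, withDensity_apply _ measurableSet_Iic]
    have h1 : ∫⁻ y in Iic w, f y = ∫⁻ y in Iic w, ENNReal.ofReal (cm * α * (-y) ^ (-α - 1)) := by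
      apply setLIntegral_congr_fun measurableSet_Iic
      intro y hy
      have hy0 : y < 0 := lt_of_le_of_lt hy hw
      rw [hf]
      simp only [if_neg (by linarith : ¬ (0:ℝ) < y), if_pos hy0]
    rw [h1]
    have hmeas : Measurable (fun y : ℝ => ENNReal.ofReal (cm * α * (-y) ^ (-α - 1))) := by
      fun_prop
    have hpre : Neg.neg ⁻¹' Iic w = Ici (-w) := by
      ext x
      simp only [mem_preimage, mem_Iic, mem_Ici, neg_le]
    calc ∫⁻ y in Iic w, ENNReal.ofReal (cm * α * (-y) ^ (-α - 1)) ∂volume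
        = ∫⁻ y in Iic w, ENNReal.ofReal (cm * α * (-y) ^ (-α - 1))
            ∂(Measure.map Neg.neg volume) := by
          rw [Measure.map_neg_eq_self (volume : Measure ℝ)]
      _ = ∫⁻ x in Neg.neg ⁻¹' Iic w, ENNReal.ofReal (cm * α * (-(-x)) ^ (-α - 1)) ∂volume :=
          setLIntegral_map measurableSet_Iic hmeas measurable_neg
      _ = ∫⁻ x in Ici (-w), ENNReal.ofReal (cm * α * x ^ (-α - 1)) ∂volume := by
          rw [hpre]
          simp only [neg_neg]
      _ = ∫⁻ x in Ioi (-w), ENNReal.ofReal (cm * α * x ^ (-α - 1)) ∂volume := by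
          rw [← MeasureTheory.restrict_Ioi_eq_restrict_Ici]
      _ = ENNReal.ofReal (cm * (-w) ^ (-α)) :=
          scaling_keyL α cm (-w) hα hcm0 (by linarith)
  -- agreement on Ioc intervals with negative right endpoint
  have hIoc : ∀ c v : ℝ, v < 0 → μ (Ioc c v) = ν (Ioc c v) := by
    intro c v hv
    rcases le_or_gt v c with h | h
    · rw [Ioc_eq_empty (not_lt.2 h)]
      simp
    · have hc : c < 0 := h.trans hv
      rw [← Iic_sdiff_Iic,
        measure_diff (Iic_subset_Iic.2 h.le) measurableSet_Iic.nullMeasurableSet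
          (by rw [hIic c hc]; exact ENNReal.ofReal_ne_top),
        measure_diff (Iic_subset_Iic.2 h.le) measurableSet_Iic.nullMeasurableSet
          (by rw [hνIic c hc]; exact ENNReal.ofReal_ne_top),
        hIic v hv, hIic c hc, hνIic v hv, hνIic c hc]
  -- now conclude via a π-system argument
  have hgen : (inferInstance : MeasurableSpace ℝ) =
      MeasurableSpace.generateFrom (range Ioi) :=
    BorelSpace.measurable_eq.trans (borel_eq_generateFrom_Ioi ℝ)
  refine Measure.ext_of_generateFrom_of_cover
    (S := range Ioi)
    (T := insert {(0:ℝ)} ((range fun n : ℕ => Ioi (1/((n:ℝ)+1))) ∪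
      (range fun n : ℕ => Ioc (-((n:ℝ)+1)) (-(1/((n:ℝ)+1))))))
    hgen ?_ isPiSystem_Ioi ?_ ?_ ?_ ?_
  · exact (((countable_range _).union (countable_range _)).insert _)
  · -- cover
    ext x
    simp only [mem_sUnion, mem_univ, iff_true, mem_insert_iff, mem_union, mem_range]
    rcases lt_trichotomy x 0 with hx | hx | hx
    · obtain ⟨n₁, hn₁⟩ := exists_nat_one_div_lt (neg_pos.2 hx)
      obtain ⟨n₂, hn₂⟩ := exists_nat_gt (-x)
      refine ⟨_, Or.inr (Or.inr ⟨max n₁ n₂, rfl⟩), ?_, ?_⟩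
      · have h2 : (n₂:ℝ) ≤ ((max n₁ n₂ : ℕ) : ℝ) := Nat.cast_le.2 (le_max_right _ _)
        linarith
      · have h1 : (1:ℝ)/(((max n₁ n₂ : ℕ) : ℝ)+1) ≤ 1/((n₁:ℝ)+1) := by
          apply one_div_le_one_div_of_le (by positivity)
          have : (n₁:ℝ) ≤ ((max n₁ n₂ : ℕ) : ℝ) := Nat.cast_le.2 (le_max_left _ _)
          linarith
        linarith
    · exact ⟨{0}, Or.inl rfl, by simp [hx]⟩
    · obtain ⟨n, hn⟩ := exists_nat_one_div_lt hx
      exact ⟨_, Or.inr (Or.inl ⟨n, rfl⟩), hn⟩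
  · -- finiteness
    intro t ht
    simp only [mem_insert_iff, mem_union, mem_range] at ht
    rcases ht with rfl | ⟨n, rfl⟩ | ⟨n, rfl⟩
    · rw [h0]; exact ENNReal.zero_ne_top
    · rw [hIoi _ (by positivity)]; exact ENNReal.ofReal_ne_top
    · have hneg : -(1/((n:ℝ)+1)) < 0 := by
        have : (0:ℝ) < 1/((n:ℝ)+1) := by positivity
        linarith
      exact ne_top_of_le_ne_top
        (by rw [hIic _ hneg]; exact ENNReal.ofReal_ne_top)
        (measure_mono Ioc_subset_Iic_self)
  · -- ST_eq
    rintro t ht s ⟨a, rfl⟩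
    simp only [mem_insert_iff, mem_union, mem_range] at ht
    rcases ht with rfl | ⟨n, rfl⟩ | ⟨n, rfl⟩
    · rw [measure_mono_null inter_subset_right h0,
        measure_mono_null inter_subset_right hν0]
    · rw [Ioi_inter_Ioi]
      have hpos : (0:ℝ) < a ⊔ (1/((n:ℝ)+1)) :=
        lt_of_lt_of_le (by positivity) (le_max_right _ _)
      rw [hIoi _ hpos, hνIoi _ hpos]
    · rw [inter_comm, Ioc_inter_Ioi]
      have hneg : -(1/((n:ℝ)+1)) < 0 := by
        have : (0:ℝ) < 1/((n:ℝ)+1) := by positivity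
        linarith
      exact hIoc _ _ hneg
  · -- T_eq
    intro t ht
    simp only [mem_insert_iff, mem_union, mem_range] at ht
    rcases ht with rfl | ⟨n, rfl⟩ | ⟨n, rfl⟩
    · rw [h0, hν0]
    · have hpos : (0:ℝ) < 1/((n:ℝ)+1) := by positivity
      rw [hIoi _ hpos, hνIoi _ hpos]
    · have hneg : -(1/((n:ℝ)+1)) < 0 := by
        have : (0:ℝ) < 1/((n:ℝ)+1) := by positivity
        linarith
      exact hIoc _ _ hneg
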